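/- arXiv:2511.21481 — 2 statements merged into one kernel-verified Lean document; each statement's English description precedes it below -/
import Mathlib

section
/- Let X be a linear order, let σ = (σ_i)_{i≥0} be an infinite <_{X^ω}-descending sequence, and for i < j define c(i,j) := |σ_j| if σ_j is a proper initial segment of σ_i, and otherwise c(i,j) := the least s such that σ_i(s) ≠ σ_j(s). Let H = {h_0 < h_1 < h_2 < …} be an infinite subset of ℕ such that c is constant on pairs from H, with constant value c*. Then c* is odd, c* < |σ_{h_i}| for every i, and writing c* = 2t+1, the sequence i ↦ a_t^{h_i} of t-th X-coefficients of the σ_{h_i} is strictly <_X-decreasing. -/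
/-- `l` represents an element of `X^ω`: a finite sequence of pairs `(b_t, a_t)` with
strictly decreasing natural-number exponents `b_0 > b_1 > … > b_m`. -/
def IsExpSeq {X : Type*} (l : List (ℕ × X)) : Prop :=
  l.Chain' (fun p q => q.1 < p.1)

/-- The `s`-th component of `τ`: at even positions `2t` the exponent `b_t` (in `ℕ`),
at odd positions `2t+1` the coefficient `a_t` (in `X`); `none` if undefined. -/
def comp {X : Type*} (l : List (ℕ × X)) (s : ℕ) : Option (ℕ ⊕ X) :=
  if s % 2 = 0 then (l[s / 2]?).map (fun p => Sum.inl p.1)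
  else (l[s / 2]?).map (fun p => Sum.inr p.2)

/-- The order on `X^ω`: `τ <_{X^ω} σ` iff `τ` is a proper initial segment of `σ`, or at the
least index `s` where both components are defined and differ, the component of `τ` is smaller
(comparing even positions in `ℕ` and odd positions in `X`). -/
def XOmegaLt {X : Type*} [LinearOrder X] (τ σ : List (ℕ × X)) : Prop :=
  (τ <+: σ ∧ τ ≠ σ) ∨
  ∃ s, (∀ r, r < s → comp τ r = comp σ r) ∧
    ∃ a b, comp τ s = some a ∧ comp σ s = some b ∧ Sum.Lex (· < ·) (· < ·) a b

-- The first-difference colouring `c(i,j)` associated to a sequence `σ`: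
-- `c(i,j) = |σ_j|` if `σ_j` is a proper initial segment of `σ_i`, and otherwise
-- the least `s` with `σ_i(s) ≠ σ_j(s)`.
open Classical in
noncomputable def firstDiff {X : Type*} (σs : ℕ → List (ℕ × X)) (i j : ℕ) : ℕ :=
  if σs j <+: σs i ∧ σs j ≠ σs i then 2 * (σs j).length
  else sInf {s | comp (σs i) s ≠ comp (σs j) s}

section Aux
variable {X : Type*}

theorem comp_eq_none_iff (l : List (ℕ × X)) (s : ℕ) :
    comp l s = none ↔ 2 * l.length ≤ s := by
  unfold comp
  split <;> rw [Option.map_eq_none_iff, List.getElem?_eq_none_iff] <;> omega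

theorem comp_some_lt {l : List (ℕ × X)} {s : ℕ} {a : ℕ ⊕ X}
    (h : comp l s = some a) : s < 2 * l.length := by
  by_contra hc
  rw [(comp_eq_none_iff l s).2 (by omega)] at h
  cases h

theorem comp_defined (l : List (ℕ × X)) (s : ℕ) (h : s < 2 * l.length) :
    ∃ a, comp l s = some a := by
  rcases hc : comp l s with _ | a
  · exact absurd ((comp_eq_none_iff l s).1 hc) (by omega)
  · exact ⟨a, rfl⟩

theorem getElem?_prefix {τ σ : List (ℕ × X)} (h : τ <+: σ) {k : ℕ} {p : ℕ × X}
    (hp : τ[k]? = some p) : σ[k]? = some p := by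
  obtain ⟨u, rfl⟩ := h
  have hl : k < τ.length := by
    by_contra hc
    rw [List.getElem?_eq_none_iff.2 (by omega)] at hp
    cases hp
  rw [List.getElem?_append, if_pos hl]
  exact hp

theorem comp_prefix {τ σ : List (ℕ × X)} (h : τ <+: σ) {s : ℕ} {a : ℕ ⊕ X}
    (hs : comp τ s = some a) : comp σ s = some a := by
  by_cases hpar : s % 2 = 0
  · simp only [comp, if_pos hpar, Option.map_eq_some_iff] at hs ⊢
    obtain ⟨p, hp, rfl⟩ := hs
    exact ⟨p, getElem?_prefix h hp, rfl⟩
  · simp only [comp, if_neg hpar, Option.map_eq_some_iff] at hs ⊢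
    obtain ⟨p, hp, rfl⟩ := hs
    exact ⟨p, getElem?_prefix h hp, rfl⟩

theorem take_eq_of_comp {l l' : List (ℕ × X)} {n : ℕ}
    (H : ∀ r, r < 2 * n → comp l r = comp l' r) : l.take n = l'.take n := by
  apply List.ext_getElem? (l₁ := l.take n) (l₂ := l'.take n)
  intro k
  rw [List.getElem?_take, List.getElem?_take]
  split
  · rename_i hk
    have h1 := H (2 * k) (by omega)
    have h2 := H (2 * k + 1) (by omega)
    simp only [comp, if_pos (by omega : (2 * k) % 2 = 0),
      if_neg (by omega : ¬ (2 * k + 1) % 2 = 0),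
      (by omega : (2 * k) / 2 = k), (by omega : (2 * k + 1) / 2 = k)] at h1 h2
    cases hl : l[k]? with
    | none =>
      cases hl' : l'[k]? with
      | none => rfl
      | some q => rw [hl, hl'] at h1; simp at h1
    | some p =>
      cases hl' : l'[k]? with
      | none => rw [hl, hl'] at h1; simp at h1
      | some q =>
        rw [hl, hl'] at h1 h2
        simp only [Option.map_some, Option.some.injEq, Sum.inl.injEq, Sum.inr.injEq] at h1 h2
        exact congrArg some (Prod.ext h1 h2)
  · rfl

theorem lex_trans {a b c : ℕ ⊕ X} [LinearOrder X]
    (h1 : Sum.Lex (· < ·) (· < ·) a b) (h2 : Sum.Lex (· < ·) (· < ·) b c) :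
    Sum.Lex (· < ·) (· < ·) a c := by
  cases h1 with
  | inl h => cases h2 with
    | inl h' => exact Sum.Lex.inl (h.trans h')
    | sep => exact Sum.Lex.sep _ _
  | inr h => cases h2 with
    | inr h' => exact Sum.Lex.inr (h.trans h')
  | sep => cases h2 with
    | inr h' => exact Sum.Lex.sep _ _

theorem lex_ne {a b : ℕ ⊕ X} [LinearOrder X]
    (h : Sum.Lex (· < ·) (· < ·) a b) : a ≠ b := by
  rintro rfl
  cases h with
  | inl h' => exact lt_irrefl _ h'
  | inr h' => exact lt_irrefl _ h'

theorem xlt_trans [LinearOrder X] {τ σ ρ : List (ℕ × X)}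
    (h1 : XOmegaLt τ σ) (h2 : XOmegaLt σ ρ) : XOmegaLt τ ρ := by
  rcases h1 with ⟨hp1, hne1⟩ | ⟨s, hagree, a, b, ha, hb, hab⟩
  · rcases h2 with ⟨hp2, hne2⟩ | ⟨s, hagree, a, b, ha, hb, hab⟩
    · left
      refine ⟨hp1.trans hp2, ?_⟩
      rintro rfl
      exact hne1 (hp1.eq_of_length (le_antisymm hp1.length_le hp2.length_le))
    · -- τ prefix σ, σ <_s ρ
      rcases hτs : comp τ s with _ | c
      · -- τ undefined at s : τ is a proper prefix of ρ
        left
        have hτlen : 2 * τ.length ≤ s := (comp_eq_none_iff τ s).1 hτs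
        have hρlen : s < 2 * ρ.length := comp_some_lt hb
        have htake : σ.take τ.length = ρ.take τ.length :=
          take_eq_of_comp (fun r hr => hagree r (by omega))
        have hτ : τ = σ.take τ.length := List.prefix_iff_eq_take.1 hp1
        constructor
        · rw [hτ, htake]; exact List.take_prefix _ _
        · rintro rfl
          omega
      · -- τ defined at s
        right
        have hc : comp σ s = some c := comp_prefix hp1 hτs
        rw [ha] at hc
        refine ⟨s, ?_, c, b, hτs, hb, (Option.some.inj hc) ▸ hab⟩
        intro r hr
        obtain ⟨x, hx⟩ := comp_defined τ r (by have := comp_some_lt hτs; omega)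
        rw [hx, ← hagree r hr, comp_prefix hp1 hx]
  · rcases h2 with ⟨hp2, hne2⟩ | ⟨s', hagree', a', b', ha', hb', hab'⟩
    · -- τ <_s σ, σ prefix ρ
      right
      refine ⟨s, ?_, a, b, ha, comp_prefix hp2 hb, hab⟩
      intro r hr
      obtain ⟨x, hx⟩ := comp_defined τ r (by have := comp_some_lt ha; omega)
      have hσ : comp σ r = some x := by rw [← hagree r hr]; exact hx
      rw [hx, comp_prefix hp2 hσ]
    · rcases lt_trichotomy s s' with hss | rfl | hss
      · right
        exact ⟨s, fun r hr => (hagree r hr).trans (hagree' r (hr.trans hss)),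
          a, b, ha, by rw [← hagree' s hss]; exact hb, hab⟩
      · right
        have hba : a' = b := by rw [ha'] at hb; exact Option.some.inj hb
        subst hba
        exact ⟨s, fun r hr => (hagree r hr).trans (hagree' r hr),
          a, b', ha, hb', lex_trans hab hab'⟩
      · right
        exact ⟨s', fun r hr => (hagree r (hr.trans hss)).trans (hagree' r hr),
          a', b', by rw [hagree s' hss]; exact ha', hb', hab'⟩

theorem sInf_eq_of {S : Set ℕ} {n : ℕ} (h1 : n ∈ S) (h2 : ∀ m, m < n → m ∉ S) :
    sInf S = n := by
  apply le_antisymm (csInf_le (OrderBot.bddBelow _) h1)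
  by_contra hc
  push_neg at hc
  exact h2 _ hc (csInf_mem ⟨n, h1⟩)

end Aux

/-- if `H = {h_0 < h_1 < …}` is infinite and the first-difference colouring `c`
is constant on pairs from `H` with value `c*`, then `c*` is odd, `c* < |σ_{h_i}|` for every `i`,
and the sequence of `t`-th `X`-coefficients (where `c* = 2t+1`, i.e. the components at
position `c*`) of the `σ_{h_i}` is strictly `<_X`-decreasing. -/
theorem stmt_3 {X : Type*} [LinearOrder X] (σs : ℕ → List (ℕ × X))
    (hvalid : ∀ i, IsExpSeq (σs i))
    (hdesc : ∀ i, XOmegaLt (σs (i + 1)) (σs i))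
    (h : ℕ → ℕ) (hmono : StrictMono h)
    (cstar : ℕ) (hhom : ∀ i j, i < j → firstDiff σs (h i) (h j) = cstar) :
    cstar % 2 = 1 ∧
    (∀ i, cstar < 2 * (σs (h i)).length) ∧
    ∀ i j, i < j → ∀ a b : X,
      comp (σs (h i)) cstar = some (Sum.inr a) →
      comp (σs (h j)) cstar = some (Sum.inr b) → b < a := by
  classical
  have hchain : ∀ i j, i < j → XOmegaLt (σs j) (σs i) := by
    intro i j hij
    induction j with
    | zero => omega
    | succ k ih =>
      rcases Nat.lt_succ_iff_lt_or_eq.1 hij with h' | heq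
      · exact xlt_trans (hdesc k) (ih h')
      · rw [heq]; exact hdesc k
  have hnopre : ∀ i j, i < j → ¬ (σs (h j) <+: σs (h i) ∧ σs (h j) ≠ σs (h i)) := by
    rintro i j hij ⟨hp, hne⟩
    have hc1 : cstar = 2 * (σs (h j)).length := by
      rw [← hhom i j hij, firstDiff, if_pos ⟨hp, hne⟩]
    have hlt := hchain (h j) (h (j + 1)) (hmono (Nat.lt_succ_self j))
    have hc2 := hhom j (j + 1) (Nat.lt_succ_self j)
    rcases hlt with ⟨hp2, hne2⟩ | ⟨s, hagree, a, b, ha, hb, hab⟩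
    · rw [firstDiff, if_pos ⟨hp2, hne2⟩] at hc2
      have : (σs (h (j + 1))).length < (σs (h j)).length :=
        lt_of_le_of_ne hp2.length_le (fun e => hne2 (hp2.eq_of_length e))
      omega
    · have hnp : ¬ (σs (h (j + 1)) <+: σs (h j) ∧ σs (h (j + 1)) ≠ σs (h j)) := by
        rintro ⟨hp2, hne2⟩
        have := comp_prefix hp2 ha
        rw [hb] at this
        exact lex_ne hab (Option.some.inj this).symm
      rw [firstDiff, if_neg hnp] at hc2
      have hsinf : sInf {s' | comp (σs (h j)) s' ≠ comp (σs (h (j + 1))) s'} = s := by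
        apply sInf_eq_of
        · intro hcontra
          rw [ha, hb] at hcontra
          exact lex_ne hab (Option.some.inj hcontra.symm)
        · intro m hm hmem
          exact hmem (hagree m hm).symm
      have hslt : s < 2 * (σs (h j)).length := comp_some_lt hb
      omega
  have hpair : ∀ i j, i < j →
      ∃ a b, comp (σs (h j)) cstar = some a ∧ comp (σs (h i)) cstar = some b ∧
        Sum.Lex (· < ·) (· < ·) a b := by
    intro i j hij
    rcases hchain (h i) (h j) (hmono hij) with hpre | ⟨s, hagree, a, b, ha, hb, hab⟩
    · exact absurd hpre (hnopre i j hij)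
    · have hfd := hhom i j hij
      rw [firstDiff, if_neg (hnopre i j hij)] at hfd
      have hsinf : sInf {s' | comp (σs (h i)) s' ≠ comp (σs (h j)) s'} = s := by
        apply sInf_eq_of
        · intro hcontra
          rw [ha, hb] at hcontra
          exact lex_ne hab (Option.some.inj hcontra.symm)
        · intro m hm hmem
          exact hmem (hagree m hm).symm
      rw [hsinf] at hfd
      subst hfd
      exact ⟨a, b, ha, hb, hab⟩
  have hlen : ∀ i, cstar < 2 * (σs (h i)).length := by
    intro i
    obtain ⟨a, b, ha, hb, hab⟩ := hpair i (i + 1) (Nat.lt_succ_self i)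
    exact comp_some_lt hb
  have hodd : cstar % 2 = 1 := by
    by_contra hc
    have hc0 : cstar % 2 = 0 := by omega
    set f : ℕ → ℕ := fun i => (((σs (h i))[cstar / 2]?).map Prod.fst).getD 0 with hf
    have hanti : ∀ i j, i < j → f j < f i := by
      intro i j hij
      obtain ⟨a, b, ha, hb, hab⟩ := hpair i j hij
      simp only [comp, if_pos hc0, Option.map_eq_some_iff] at ha hb
      obtain ⟨p, hp, rfl⟩ := ha
      obtain ⟨q, hq, rfl⟩ := hb
      have hpq : p.1 < q.1 := by cases hab; assumption
      simp only [hf, hp, hq, Option.map_some, Option.getD_some]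
      exact hpq
    have key : ∀ n, f n + n ≤ f 0 := by
      intro n
      induction n with
      | zero => omega
      | succ k ih =>
        have := hanti k (k + 1) (Nat.lt_succ_self k)
        omega
    have := key (f 0 + 1)
    omega
  refine ⟨hodd, hlen, ?_⟩
  intro i j hij a b hca hcb
  obtain ⟨a', b', ha', hb', hab⟩ := hpair i j hij
  rw [hcb] at ha'
  rw [hca] at hb'
  rw [← Option.some.inj ha', ← Option.some.inj hb'] at hab
  cases hab
  assumption
end

section
/- Fix n ∈ ℕ and a sequence (U_i)_{i≥0} of subsets of {1,…,n}, with the reset functions and the cycle-completion relation defined as in the context. Then for every i ≥ 0, if reset_{U_i}(i) ≥ 0, say reset_{U_i}(i) = r, then V_i ⊆ V_r. -/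
-- `resetAux n U i A` is the integer `reset_A(i)` of the paper: `reset_A(0) = -1`, and
-- `reset_A(i+1) = i` if some `B ⊆ {1,…,n}` with `B ⊇ A` completes a cycle at stage `i`
-- (i.e. `⋃_{reset_B(i) < h ≤ i} U_h = B`), and `reset_A(i+1) = reset_A(i)` otherwise.
open Classical in
noncomputable def resetAux (n : ℕ) (U : ℕ → Finset ℕ) : ℕ → Finset ℕ → ℤ
  | 0 => fun _ => -1
  | i + 1 => fun A =>
      if ∃ B, B ⊆ Finset.Icc 1 n ∧ A ⊆ B ∧
          ((Finset.range (i + 1)).filter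
            (fun h : ℕ => resetAux n U i B < (h : ℤ))).biUnion U = B
      then (i : ℤ)
      else resetAux n U i A

/-- `B` completes a cycle at stage `i`: `⋃_{reset_B(i) < h ≤ i} U_h = B`. -/
def CompletesCycle (n : ℕ) (U : ℕ → Finset ℕ) (i : ℕ) (B : Finset ℕ) : Prop :=
  ((Finset.range (i + 1)).filter (fun h : ℕ => resetAux n U i B < (h : ℤ))).biUnion U = B

/-- `V_i := ⋃_{reset_{U_i}(i) < h ≤ i} U_h`. -/
noncomputable def V (n : ℕ) (U : ℕ → Finset ℕ) (i : ℕ) : Finset ℕ :=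
  ((Finset.range (i + 1)).filter (fun h : ℕ => resetAux n U i (U i) < (h : ℤ))).biUnion U

noncomputable def Scup (U : ℕ → Finset ℕ) (q : ℤ) (h : ℕ) : Finset ℕ :=
  ((Finset.range (h + 1)).filter (fun t : ℕ => q < (t : ℤ))).biUnion U

section lemmas
variable {n : ℕ} {U : ℕ → Finset ℕ}

lemma mem_Scup {q : ℤ} {h : ℕ} {x : ℕ} :
    x ∈ Scup U q h ↔ ∃ t : ℕ, t ≤ h ∧ q < (t : ℤ) ∧ x ∈ U t := by
  simp [Scup, Finset.mem_biUnion, Finset.mem_filter, Finset.mem_range, Nat.lt_succ_iff]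
  tauto

open Classical in
lemma resetAux_succ (i : ℕ) (A : Finset ℕ) :
    resetAux n U (i+1) A =
      if ∃ B, B ⊆ Finset.Icc 1 n ∧ A ⊆ B ∧ CompletesCycle n U i B then (i : ℤ)
      else resetAux n U i A := rfl

lemma cc_eq {i : ℕ} {B : Finset ℕ} (h : CompletesCycle n U i B) :
    Scup U (resetAux n U i B) i = B := h

lemma Scup_anti {q q' : ℤ} (h : q' ≤ q) (m : ℕ) : Scup U q m ⊆ Scup U q' m := by
  intro x hx
  rw [mem_Scup] at hx ⊢
  obtain ⟨t, h1, h2, h3⟩ := hx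
  exact ⟨t, h1, lt_of_le_of_lt h h2, h3⟩

lemma Scup_mono_top {q : ℤ} {m h : ℕ} (hmh : m ≤ h) : Scup U q m ⊆ Scup U q h := by
  intro x hx
  rw [mem_Scup] at hx ⊢
  obtain ⟨t, h1, h2, h3⟩ := hx
  exact ⟨t, h1.trans hmh, h2, h3⟩

lemma Scup_split {q : ℤ} {m h : ℕ} (hqm : q ≤ (m : ℤ)) (hmh : m ≤ h) :
    Scup U q h = Scup U q m ∪ Scup U (m : ℤ) h := by
  ext x
  simp only [Finset.mem_union, mem_Scup]
  constructor
  · rintro ⟨t, h1, h2, h3⟩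
    rcases le_or_gt t m with h4 | h4
    · exact Or.inl ⟨t, h4, h2, h3⟩
    · exact Or.inr ⟨t, h1, by exact_mod_cast h4, h3⟩
  · rintro (⟨t, h1, h2, h3⟩ | ⟨t, h1, h2, h3⟩)
    · exact ⟨t, h1.trans hmh, h2, h3⟩
    · exact ⟨t, h1, lt_of_le_of_lt hqm h2, h3⟩

lemma Scup_subset_Icc (hU : ∀ i, U i ⊆ Finset.Icc 1 n) (q : ℤ) (h : ℕ) :
    Scup U q h ⊆ Finset.Icc 1 n := by
  intro x hx
  rw [mem_Scup] at hx
  obtain ⟨t, _, _, h3⟩ := hx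
  exact hU t h3

lemma R_lt (i : ℕ) (A : Finset ℕ) : resetAux n U i A < (i : ℤ) := by
  induction i with
  | zero => simp [resetAux]
  | succ i ih =>
      rw [resetAux_succ]
      split
      · exact_mod_cast lt_add_one (i : ℤ)
      · exact ih.trans (by exact_mod_cast lt_add_one (i : ℤ))

lemma neg_one_le_R (i : ℕ) (A : Finset ℕ) : -1 ≤ resetAux n U i A := by
  induction i with
  | zero => simp [resetAux]
  | succ i ih =>
      rw [resetAux_succ]
      split
      · omega
      · exact ih

lemma R_mono_stage {i j : ℕ} (hij : i ≤ j) (A : Finset ℕ) :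
    resetAux n U i A ≤ resetAux n U j A := by
  induction j with
  | zero => simp_all
  | succ j ih =>
      rcases Nat.lt_succ_iff_lt_or_eq.mp (Nat.lt_succ_of_le hij) with h | h
      · have h1 := ih (Nat.lt_succ_iff.mp h)
        refine h1.trans ?_
        rw [resetAux_succ]
        split
        · exact le_of_lt (R_lt j A)
        · rfl
      · subst h; rfl

lemma R_anti {i : ℕ} {A B : Finset ℕ} (hAB : A ⊆ B) :
    resetAux n U i B ≤ resetAux n U i A := by
  induction i with
  | zero => simp [resetAux]
  | succ i ih =>
      rw [resetAux_succ, resetAux_succ]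
      split
      · split
        · rfl
        · rename_i h1 h2
          obtain ⟨C, hC1, hC2, hC3⟩ := h1
          exact absurd ⟨C, hC1, hAB.trans hC2, hC3⟩ h2
      · split
        · exact le_of_lt (R_lt i B)
        · exact ih

lemma cc_subset_Icc (hU : ∀ i, U i ⊆ Finset.Icc 1 n) {i : ℕ} {B : Finset ℕ}
    (h : CompletesCycle n U i B) : B ⊆ Finset.Icc 1 n := by
  rw [← cc_eq h]; exact Scup_subset_Icc hU _ _

lemma cc_contains_U (hU : ∀ i, U i ⊆ Finset.Icc 1 n) {i : ℕ} {B : Finset ℕ}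
    (h : CompletesCycle n U i B) : U i ⊆ B := by
  rw [← cc_eq h]
  intro x hx
  exact mem_Scup.mpr ⟨i, le_refl i, R_lt i B, hx⟩

lemma R_succ_of_cc (hU : ∀ i, U i ⊆ Finset.Icc 1 n) {i : ℕ} {A B : Finset ℕ}
    (hAB : A ⊆ B) (hB : CompletesCycle n U i B) : resetAux n U (i+1) A = (i : ℤ) := by
  rw [resetAux_succ, if_pos ⟨B, cc_subset_Icc hU hB, hAB, hB⟩]

/-- If `reset_A(i) = ρ` and a superset of `A` completes a cycle at a stage `s ∈ (ρ, i)`,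
contradiction. -/
lemma no_reset (hU : ∀ i, U i ⊆ Finset.Icc 1 n) {i : ℕ} {A : Finset ℕ} {ρ : ℤ}
    (hR : resetAux n U i A = ρ) {s : ℕ} (hs1 : ρ < (s : ℤ)) (hs2 : s < i)
    {B : Finset ℕ} (hAB : A ⊆ B) (hB : CompletesCycle n U s B) : False := by
  have h1 : resetAux n U (s+1) A = (s : ℤ) := R_succ_of_cc hU hAB hB
  have h2 := R_mono_stage (n := n) (U := U) (Nat.succ_le_of_lt hs2) A
  rw [h1, hR] at h2
  omega

/-- If `reset_A(i) = r ≥ 0` then some `B ⊇ A` completes a cycle at stage `r`. -/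
lemma exists_completer {i : ℕ} {A : Finset ℕ} {r : ℕ}
    (hR : resetAux n U i A = (r : ℤ)) :
    ∃ B, A ⊆ B ∧ CompletesCycle n U r B := by
  induction i with
  | zero => simp [resetAux] at hR
  | succ i ih =>
      rw [resetAux_succ] at hR
      split at hR
      · rename_i h
        obtain ⟨B, _, hAB, hB⟩ := h
        have : i = r := by exact_mod_cast hR
        subst this
        exact ⟨B, hAB, hB⟩
      · exact ih hR

/-- If `reset_A(i) = r ≥ 0` then `reset_A(h) = r` for all `h ∈ (r, i]`. -/
lemma R_stable (hU : ∀ i, U i ⊆ Finset.Icc 1 n) {i : ℕ} {A : Finset ℕ} {r : ℕ}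
    (hR : resetAux n U i A = (r : ℤ)) {h : ℕ} (h1 : r < h) (h2 : h ≤ i) :
    resetAux n U h A = (r : ℤ) := by
  obtain ⟨B, hAB, hB⟩ := exists_completer hR
  have e1 : resetAux n U (r+1) A = (r : ℤ) := R_succ_of_cc hU hAB hB
  have e2 := R_mono_stage (n := n) (U := U) (Nat.succ_le_of_lt h1) A
  have e3 := R_mono_stage (n := n) (U := U) h2 A
  rw [e1] at e2; rw [hR] at e3
  omega

/-- Fixpoint lemma: if `X = ⋃_{q < t ≤ h} U_t` with `reset_X(h) ≤ q`, then `X` is contained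
in some set completing a cycle at stage `h`. -/
lemma fixpoint (hU : ∀ i, U i ⊆ Finset.Icc 1 n) (h : ℕ) :
    ∀ k : ℕ, ∀ q : ℤ, (q + 1).toNat ≤ k → resetAux n U h (Scup U q h) ≤ q →
    ∃ B, Scup U q h ⊆ B ∧ CompletesCycle n U h B := by
  intro k
  induction k with
  | zero =>
      intro q hk hq
      have h0 : q ≤ -1 := by omega
      have h1 : -1 ≤ resetAux n U h (Scup U q h) := neg_one_le_R _ _
      have h2 : resetAux n U h (Scup U q h) = q := le_antisymm hq (by omega)
      refine ⟨Scup U q h, subset_rfl, ?_⟩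
      show Scup U (resetAux n U h (Scup U q h)) h = Scup U q h
      rw [h2]
  | succ k ih =>
      intro q hk hq
      rcases eq_or_lt_of_le hq with he | hlt
      · refine ⟨Scup U q h, subset_rfl, ?_⟩
        show Scup U (resetAux n U h (Scup U q h)) h = Scup U q h
        rw [he]
      · set q' := resetAux n U h (Scup U q h) with hq'
        have hq'1 : -1 ≤ q' := neg_one_le_R _ _
        have hsub : Scup U q h ⊆ Scup U q' h := Scup_anti (le_of_lt hlt) h
        have hr' : resetAux n U h (Scup U q' h) ≤ q' := R_anti hsub
        obtain ⟨B, hB1, hB2⟩ := ih q' (by omega) hr'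
        exact ⟨B, hsub.trans hB1, hB2⟩
lemma cc_reset_not_lt (hU : ∀ i, U i ⊆ Finset.Icc 1 n) {i : ℕ} {B C : Finset ℕ}
    (hB : CompletesCycle n U i B) (hC : CompletesCycle n U i C)
    (hlt : resetAux n U i B < resetAux n U i C) : False := by
  set b := resetAux n U i B with hb
  set c := resetAux n U i C with hc
  have hb1 : -1 ≤ b := neg_one_le_R _ _
  have hc0 : 0 ≤ c := by omega
  set cn := c.toNat with hcn
  have hcnc : (cn : ℤ) = c := Int.toNat_of_nonneg hc0
  have hcni : (cn : ℤ) < (i : ℤ) := by rw [hcnc]; exact R_lt i C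
  have hcni' : cn < i := by exact_mod_cast hcni
  have hbcn : b < (cn : ℤ) := by omega
  obtain ⟨F, hCF, hF⟩ := exists_completer (hc.symm.trans hcnc.symm)
  have hBeq : Scup U b i = B := cc_eq hB
  have hCeq : Scup U c i = C := cc_eq hC
  have hsplit : Scup U b i = Scup U b cn ∪ Scup U (cn : ℤ) i :=
    Scup_split (le_of_lt hbcn) (le_of_lt hcni')
  have hcne : Scup U (cn : ℤ) i = C := by rw [hcnc]; exact hCeq
  set f := resetAux n U cn F with hf
  have hFeq : Scup U f cn = F := cc_eq hF
  rcases le_or_gt f b with hfb | hbf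
  · -- F ⊇ B, contradiction with no reset of B in (b, i)
    have h1 : Scup U b cn ⊆ F := by rw [← hFeq]; exact Scup_anti hfb cn
    have h2 : B ⊆ F := by
      rw [← hBeq, hsplit, hcne]
      exact Finset.union_subset h1 hCF
    exact no_reset hU hb.symm hbcn hcni' h2 hF
  · -- F ⊆ Scup b cn, so B = Scup b cn; apply fixpoint at stage cn
    have h1 : F ⊆ Scup U b cn := by rw [← hFeq]; exact Scup_anti (le_of_lt hbf) cn
    have h2 : B = Scup U b cn := by
      rw [← hBeq, hsplit, hcne]
      exact Finset.union_eq_left.mpr (hCF.trans h1)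
    have h3 : resetAux n U cn B ≤ b := by
      rw [hb]; exact R_mono_stage (le_of_lt hcni') B
    rw [h2] at h3
    obtain ⟨G, hG1, hG2⟩ := fixpoint hU cn (b + 1).toNat b le_rfl h3
    have h4 : B ⊆ G := h2 ▸ hG1
    exact no_reset hU hb.symm hbcn hcni' h4 hG2

lemma cc_unique (hU : ∀ i, U i ⊆ Finset.Icc 1 n) {i : ℕ} {B C : Finset ℕ}
    (hB : CompletesCycle n U i B) (hC : CompletesCycle n U i C) : B = C := by
  have h1 : ¬ resetAux n U i B < resetAux n U i C := fun h => cc_reset_not_lt hU hB hC h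
  have h2 : ¬ resetAux n U i C < resetAux n U i B := fun h => cc_reset_not_lt hU hC hB h
  have h3 : resetAux n U i B = resetAux n U i C := by omega
  rw [← cc_eq hB, ← cc_eq hC, h3]

/-- Part 1: if `reset_{U_i}(i) = r ≥ 0` with `C` the completer at `r` containing `U_i`, then
`U_h ⊆ C` for all `h ∈ (r, i]`. -/
lemma part1 (hU : ∀ i, U i ⊆ Finset.Icc 1 n) {i r : ℕ}
    (hR : resetAux n U i (U i) = (r : ℤ)) {C : Finset ℕ}
    (hC : CompletesCycle n U r C) (hUC : U i ⊆ C)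
    {h : ℕ} (h1 : r < h) (h2 : h ≤ i) : U h ⊆ C := by
  rcases eq_or_lt_of_le h2 with he | hlt
  · subst he; exact hUC
  set q := resetAux n U r C with hq
  have hCeq : Scup U q r = C := cc_eq hC
  have hq1 : -1 ≤ q := neg_one_le_R _ _
  have hqr : q < (r : ℤ) := R_lt r C
  have hsplit : Scup U q h = Scup U q r ∪ Scup U (r : ℤ) h :=
    Scup_split (le_of_lt hqr) (le_of_lt h1)
  have hCE : C ⊆ Scup U q h := by rw [← hCeq]; exact Scup_mono_top (le_of_lt h1)
  have hUiE : U i ⊆ Scup U q h := hUC.trans hCE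
  have hRh : resetAux n U h (U i) = (r : ℤ) := R_stable hU hR h1 (le_of_lt hlt)
  have hs : resetAux n U h (Scup U q h) ≤ (r : ℤ) := by
    rw [← hRh]; exact R_anti hUiE
  set s := resetAux n U h (Scup U q h) with hsd
  rcases le_or_gt s q with hsq | hqs
  · -- fixpoint gives a completer at h containing U_i: contradiction
    obtain ⟨G, hG1, hG2⟩ := fixpoint hU h (q + 1).toNat q le_rfl hsq
    exact (no_reset hU hR (by exact_mod_cast h1) hlt (hUiE.trans hG1) hG2).elim
  · have hs0 : 0 ≤ s := by omega
    obtain ⟨sn, hsns⟩ : ∃ m : ℕ, (m : ℤ) = s := ⟨s.toNat, Int.toNat_of_nonneg hs0⟩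
    obtain ⟨F, hEF, hF⟩ := exists_completer (hsd.symm.trans hsns.symm)
    rcases lt_or_eq_of_le hs with hsr | hsr
    · -- a completer at sn ∈ (q, r) contains C : contradiction with reset_C(r) = q
      have hsnr : sn < r := by omega
      exact (no_reset hU hq.symm (by omega) hsnr (hCE.trans hEF) hF).elim
    · -- s = r : the completer F at r equals C, and U_h ⊆ E ⊆ F = C
      have hsnr : sn = r := by omega
      rw [hsnr] at hF
      have hFC : F = C := cc_unique hU hF hC
      have hUhE : U h ⊆ Scup U q h := fun x hx =>
        mem_Scup.mpr ⟨h, le_refl h, by omega, hx⟩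
      rw [← hFC]
      exact hUhE.trans hEF
end lemmas

/-- for every `i`, if `reset_{U_i}(i) ≥ 0`, say `reset_{U_i}(i) = r`, then
`V_i ⊆ V_r`. -/
theorem stmt_12 (n : ℕ) (U : ℕ → Finset ℕ) (hU : ∀ i, U i ⊆ Finset.Icc 1 n) :
    ∀ i (r : ℕ), resetAux n U i (U i) = (r : ℤ) → V n U i ⊆ V n U r := by
  intro i r hR
  have hVi : V n U i = Scup U (resetAux n U i (U i)) i := rfl
  have hVr : V n U r = Scup U (resetAux n U r (U r)) r := rfl
  have hri : (r : ℤ) < (i : ℤ) := hR ▸ R_lt i (U i)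
  have hri' : r < i := by exact_mod_cast hri
  obtain ⟨C, hUC, hC⟩ := exists_completer hR
  set q := resetAux n U r C with hq
  have hCeq : Scup U q r = C := cc_eq hC
  have hq1 : -1 ≤ q := neg_one_le_R _ _
  have hqr : q < (r : ℤ) := R_lt r C
  -- Step 1: V i ⊆ C
  have step1 : V n U i ⊆ C := by
    rw [hVi, hR]
    intro x hx
    obtain ⟨t, ht1, ht2, ht3⟩ := mem_Scup.mp hx
    exact part1 hU hR hC hUC (by exact_mod_cast ht2) ht1 ht3
  -- Step 2: C ⊆ V r
  set w := resetAux n U r (U r) with hw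
  have hUrC : U r ⊆ C := by
    rw [← hCeq]; intro x hx; exact mem_Scup.mpr ⟨r, le_refl r, hqr, hx⟩
  have hqw : q ≤ w := R_anti hUrC
  have step2 : C ⊆ V n U r := by
    rcases eq_or_lt_of_le hqw with he | hlt
    · rw [hVr, ← he, hCeq]
    · -- w > q : derive False
      exfalso
      have hw0 : 0 ≤ w := by omega
      obtain ⟨wn, hwn⟩ : ∃ m : ℕ, (m : ℤ) = w := ⟨w.toNat, Int.toNat_of_nonneg hw0⟩
      obtain ⟨D, hUrD, hD⟩ := exists_completer (n := n) (hw.symm.trans hwn.symm)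
      have hwnr : wn < r := by
        have h0 := R_lt (n := n) (U := U) r (U r); omega
      have hqwn : q < (wn : ℤ) := by omega
      have key : Scup U (wn : ℤ) r ⊆ D := by
        intro x hx
        obtain ⟨t, ht1, ht2, ht3⟩ := mem_Scup.mp hx
        exact part1 hU (hw.symm.trans hwn.symm) hD hUrD (by exact_mod_cast ht2) ht1 ht3
      have hDeq : Scup U (resetAux n U wn D) wn = D := cc_eq hD
      have hCsplit : C = Scup U q wn ∪ Scup U (wn : ℤ) r := by
        rw [← hCeq, Scup_split (le_of_lt hqwn) (le_of_lt hwnr)]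
      rcases le_or_gt (resetAux n U wn D) q with hdq | hqd
      · -- C ⊆ D : contradiction with reset_C(r) = q
        have h1 : Scup U q wn ⊆ D := by rw [← hDeq]; exact Scup_anti hdq wn
        have h2 : C ⊆ D := by rw [hCsplit]; exact Finset.union_subset h1 key
        exact no_reset hU hq.symm hqwn hwnr h2 hD
      · -- C ⊆ Scup q wn; fixpoint gives completer at wn containing C
        have h1 : D ⊆ Scup U q wn := by rw [← hDeq]; exact Scup_anti (le_of_lt hqd) wn
        have h2 : C ⊆ Scup U q wn := by
          rw [hCsplit]; exact Finset.union_subset subset_rfl (key.trans h1)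
        have h4 : resetAux n U wn C ≤ q := by
          rw [hq]; exact R_mono_stage (le_of_lt hwnr) C
        have h3 : resetAux n U wn (Scup U q wn) ≤ q := le_trans (R_anti h2) h4
        obtain ⟨G, hG1, hG2⟩ := fixpoint hU wn (q + 1).toNat q le_rfl h3
        exact no_reset hU hq.symm hqwn hwnr (h2.trans hG1) hG2
  exact step1.trans step2
end
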